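/- For every real number k ≥ 1 and every ε ∈ [0, 2/5), setting p = 1/(1 + √(k+1)), the following inequality holds: (1 − p − ε)/(1 + ε + (k + (1−p)/p)·(1−ε)^{−3}) ≥ (1−ε)^5/(√(k+1) + 1)². -/

import Mathlib

/-- Closing numerical inequality in the ParSSP ratio proof: for real
`k ≥ 1`, `ε ∈ [0, 2/5)` and `p = 1/(1+√(k+1))`,
`(1−p−ε)/(1+ε+(k+(1−p)/p)(1−ε)⁻³) ≥ (1−ε)⁵/(√(k+1)+1)²`. -/
theorem stmt_9 (k ε p : ℝ) (hk : 1 ≤ k) (hε0 : 0 ≤ ε) (hε1 : ε < 2 / 5)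
    (hp : p = 1 / (1 + Real.sqrt (k + 1))) :
    (1 - ε) ^ 5 / (Real.sqrt (k + 1) + 1) ^ 2 ≤
      (1 - p - ε) / (1 + ε + (k + (1 - p) / p) * ((1 - ε) ^ 3)⁻¹) := by
  have hk1 : (0:ℝ) ≤ k + 1 := by linarith
  set s := Real.sqrt (k + 1) with hs
  have hs2 : s ^ 2 = k + 1 := Real.sq_sqrt hk1
  have hsnn : 0 ≤ s := Real.sqrt_nonneg _
  have hs1 : 1 ≤ s := by nlinarith [hs2, hsnn]
  have hs0 : (0:ℝ) < 1 + s := by linarith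
  have h2s : 2 * s ≤ 3 * k := by nlinarith [hs2, hsnn, sq_nonneg (3 * k - 2 * s)]
  have h1ε : (0:ℝ) < 1 - ε := by linarith
  have hfrac : (1 - p) / p = s := by
    rw [hp]; field_simp; ring
  have hp2 : p ≤ 1 / 2 := by
    rw [hp, div_le_div_iff₀ hs0 (by norm_num : (0:ℝ) < 2)]; linarith
  have hk' : k = s ^ 2 - 1 := by linarith
  have hD : 0 < 1 + ε + (k + (1 - p) / p) * ((1 - ε) ^ 3)⁻¹ := by
    rw [hfrac]
    have h1 : 0 < (k + s) * ((1 - ε) ^ 3)⁻¹ :=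
      mul_pos (by linarith) (inv_pos.mpr (pow_pos h1ε 3))
    linarith
  rw [hfrac] at hD ⊢
  rw [div_le_div_iff₀ (by positivity) hD]
  have hL : (1 - ε) ^ 5 * (1 + ε + (k + s) * ((1 - ε) ^ 3)⁻¹) =
      (1 - ε) ^ 5 * (1 + ε) + (k + s) * (1 - ε) ^ 2 := by
    field_simp
  have hR : (1 - p - ε) * (s + 1) ^ 2 = (s - ε * (1 + s)) * (1 + s) := by
    rw [hp]; field_simp; ring
  rw [hL, hR, hk']
  have h5 : (0:ℝ) ≤ 5 - 4 * ε + ε ^ 2 := by nlinarith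
  have h25 : (0:ℝ) ≤ 2 / 5 - ε := by linarith
  have hQ : 0 ≤ s ^ 2 + 1 - (s ^ 2 + s + 4) * ε + 5 * ε ^ 3 - 4 * ε ^ 4 + ε ^ 5 := by
    nlinarith [mul_nonneg (pow_nonneg hε0 3) h5,
      mul_nonneg h25 (by nlinarith : (0:ℝ) ≤ s ^ 2 + s + 4), h2s, hs2]
  nlinarith [mul_nonneg hε0 hQ]
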